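/- Let A be a ring, M a noetherian left A-module, and φ an automorphism of A. If M_φ ≅ M ⊕ X as A-modules for some module X, then X = 0. -/

import Mathlib

/-- If `M` is a noetherian left `A`-module, `φ` a ring automorphism of `A`, and
`M_φ ≅ M ⊕ X` as `A`-modules (the isomorphism `e : M ≃+ M × X` being `A`-linear for
the twisted action `a · m = φ a • m` on the source), then `X = 0`. -/
theorem stmt1 {A M X : Type*} [Ring A] [AddCommGroup M] [Module A M]
    [IsNoetherian A M] [AddCommGroup X] [Module A X] (φ : A ≃+* A)
    (e : M ≃+ M × X)
    (he : ∀ (a : A) (m : M), e (φ a • m) = a • e m) :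
    Subsingleton X := by
  set g : M → M := fun m => (e m).1 with hg
  have hg0 : g 0 = 0 := by simp [hg]
  have hgadd : ∀ m m', g (m + m') = g m + g m' := by simp [hg]
  have hsemi : ∀ a m, g (φ a • m) = a • g m := by
    intro a m
    simp only [hg, he a m, Prod.smul_fst]
  -- iterated semilinearity
  have key : ∀ (n : ℕ) (a : A) (m : M), g^[n] ((⇑φ)^[n] a • m) = a • g^[n] m := by
    intro n
    induction n with
    | zero => intro a m; simp
    | succ n ih =>
      intro a m
      rw [Function.iterate_succ_apply g, Function.iterate_succ_apply' (⇑φ),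
        hsemi, ih, ← Function.iterate_succ_apply g]
  have hker0 : ∀ n, g^[n] 0 = 0 := by
    intro n
    induction n with
    | zero => rfl
    | succ n ih => rw [Function.iterate_succ_apply, hg0, ih]
  have hkeradd : ∀ n m m', g^[n] (m + m') = g^[n] m + g^[n] m' := by
    intro n
    induction n with
    | zero => intro m m'; rfl
    | succ n ih => intro m m'; rw [Function.iterate_succ_apply, hgadd,
        Function.iterate_succ_apply, Function.iterate_succ_apply, ih]
  -- the kernels of iterates as submodules
  have smul_mem : ∀ (n : ℕ) (a : A) (m : M), g^[n] m = 0 → g^[n] (a • m) = 0 := by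
    intro n a m hm
    have hsurj : Function.Surjective ((⇑φ)^[n]) :=
      Function.Surjective.iterate φ.surjective n
    obtain ⟨b, rfl⟩ := hsurj a
    rw [key n b m, hm, smul_zero]
  let K : ℕ → Submodule A M := fun n =>
    { carrier := {m | g^[n] m = 0}
      add_mem' := fun {m} {m'} hm hm' => by
        simp only [Set.mem_setOf_eq] at *
        rw [hkeradd n m m', hm, hm', add_zero]
      zero_mem' := hker0 n
      smul_mem' := fun a m hm => smul_mem n a m hm }
  have hmono : Monotone K := by
    apply monotone_nat_of_le_succ
    intro n m hm
    simp only [K, Set.mem_setOf_eq, Submodule.mem_mk, AddSubmonoid.mem_mk,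
      AddSubsemigroup.mem_mk] at *
    rw [Function.iterate_succ_apply' g, hm, hg0]
  obtain ⟨n, hn⟩ := monotone_stabilizes_iff_noetherian.mpr ‹IsNoetherian A M›
    ⟨K, hmono⟩
  -- g is surjective
  have hgsurj : Function.Surjective g := by
    intro m
    exact ⟨e.symm (m, 0), by simp [hg]⟩
  -- g has trivial kernel
  have hginj : ∀ m, g m = 0 → m = 0 := by
    intro m hm
    obtain ⟨m', rfl⟩ := (Function.Surjective.iterate hgsurj n) m
    have h1 : m' ∈ K (n + 1) := by
      simp only [K, Set.mem_setOf_eq, Submodule.mem_mk, AddSubmonoid.mem_mk,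
        AddSubsemigroup.mem_mk]
      rw [Function.iterate_succ_apply' g, hm]
    have h2 : K (n + 1) = K n := (hn (n + 1) (Nat.le_succ n)).symm
    rw [h2] at h1
    exact h1
  -- conclude
  refine subsingleton_of_forall_eq 0 fun x => ?_
  have hm : g (e.symm (0, x)) = 0 := by simp [hg]
  have hz := hginj _ hm
  have hpx : ((0 : M), x) = ((0 : M), (0 : X)) := by
    calc ((0 : M), x) = e (e.symm (0, x)) := (e.apply_symm_apply _).symm
      _ = e 0 := by rw [hz]
      _ = (0, 0) := by simp; rfl
  exact (Prod.ext_iff.mp hpx).2
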